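/- Let p be a prime, and let 1 ≤ b ≤ a be integers with ν_p(a-b) = 0 and {ν_p(a), ν_p(b)} = {0, k} for some k ≥ 0. Writing z_n for the p-adic limit lim_e (-1)^(p·u(n)·e) · u((u(n)·p^e)!) (where u(n) is the unit part of n), and c = a if ν_p(a) = k, c = b if ν_p(b) = k, then for all sufficiently large e, u(C(a·p^e, b·p^e)) ≡ (-1)^(p·c·k) · z_a / (z_b · z_{a-b}) (mod p^e). -/

import Mathlib

/-- The unit part of `n` with respect to `p`: `n / p^(ν_p(n))`. -/
def unitPart (p n : ℕ) : ℕ := n / p ^ (padicValNat p n)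

/-- `IsZ p n z` says that `z` is the p-adic limit of `(-1)^(p·u(n)·e) · u((u(n)·p^e)!)`. -/
def IsZ (p : ℕ) [Fact p.Prime] (n : ℕ) (z : ℤ_[p]) : Prop :=
  Filter.Tendsto
    (fun e : ℕ => ((-1 : ℤ_[p]) ^ (p * unitPart p n * e) *
      (unitPart p (Nat.factorial (unitPart p n * p ^ e)) : ℤ_[p])))
    Filter.atTop (nhds z)

open Finset Nat

namespace Stmt7Aux

/-- kill multiples of p -/
def gg (p j : ℕ) : ℕ := if p ∣ j then 1 else j

/-- product of non-multiples of p up to N -/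
def PP (p N : ℕ) : ℕ := ∏ j ∈ Finset.range N, gg p (j + 1)

lemma fact_eq (p : ℕ) (hp : p.Prime) (N : ℕ) :
    N ! = p ^ (N / p) * ((N / p)! * PP p N) := by
  induction N with
  | zero => simp [PP]
  | succ N ih =>
    have hPP : PP p (N + 1) = PP p N * gg p (N + 1) := Finset.prod_range_succ _ N
    rw [Nat.factorial_succ, ih, hPP]
    by_cases h : p ∣ N + 1
    · rw [Nat.succ_div_of_dvd h, gg, if_pos h]
      have hq : p * ((N + 1) / p) = N + 1 := Nat.mul_div_cancel' h
      rw [Nat.succ_div_of_dvd h] at hq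
      calc (N + 1) * (p ^ (N / p) * ((N / p)! * PP p N))
          = (p * (N / p + 1)) * (p ^ (N / p) * ((N / p)! * PP p N)) := by rw [hq]
        _ = p ^ (N / p + 1) * ((N / p + 1) * (N / p)! * (PP p N * 1)) := by ring
        _ = p ^ (N / p + 1) * ((N / p + 1)! * (PP p N * 1)) := by rw [Nat.factorial_succ]
    · rw [Nat.succ_div_of_not_dvd h, gg, if_neg h]; ring

lemma not_dvd_PP (p : ℕ) (hp : p.Prime) (N : ℕ) : ¬ p ∣ PP p N := by
  intro h
  rcases (Nat.Prime.prime hp).dvd_finset_prod_iff _ |>.1 h with ⟨j, -, hj⟩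
  rw [gg] at hj
  split at hj
  · exact hp.one_lt.ne' (Nat.dvd_one.1 hj)
  · exact ‹¬ p ∣ j + 1› hj

lemma unitPart_eq_ordCompl (p : ℕ) (hp : p.Prime) (n : ℕ) :
    unitPart p n = ordCompl[p] n := by
  rw [unitPart, Nat.factorization_def n hp]

lemma unitPart_mul (p : ℕ) (hp : p.Prime) (x y : ℕ) :
    unitPart p (x * y) = unitPart p x * unitPart p y := by
  rw [unitPart_eq_ordCompl p hp, unitPart_eq_ordCompl p hp, unitPart_eq_ordCompl p hp,
    Nat.ordCompl_mul]

lemma unitPart_pow_mul (p : ℕ) (hp : p.Prime) (s x : ℕ) :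
    unitPart p (p ^ s * x) = unitPart p x := by
  rw [unitPart_mul p hp, unitPart_eq_ordCompl p hp (p ^ s),
    hp.factorization_pow, Finsupp.single_eq_same, Nat.div_self (pow_pos hp.pos s),
    one_mul]

lemma unitPart_of_not_dvd (p : ℕ) (hp : p.Prime) {x : ℕ} (h : ¬ p ∣ x) :
    unitPart p x = x := by
  rw [unitPart, padicValNat.eq_zero_of_not_dvd h, pow_zero, Nat.div_one]

lemma unitPart_fact_succ (p : ℕ) (hp : p.Prime) (m e : ℕ) :
    unitPart p ((m * p ^ (e + 1))!)
      = unitPart p ((m * p ^ e)!) * PP p (m * p ^ (e + 1)) := by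
  have hdiv : m * p ^ (e + 1) / p = m * p ^ e := by
    rw [pow_succ, ← mul_assoc, Nat.mul_div_cancel _ hp.pos]
  have h1 := fact_eq p hp (m * p ^ (e + 1))
  rw [hdiv] at h1
  rw [h1, unitPart_pow_mul p hp, unitPart_mul p hp,
    unitPart_of_not_dvd p hp (not_dvd_PP p hp _)]

lemma gg_cast_add (p f t x : ℕ) (hf : 1 ≤ f) :
    ((gg p (t * p ^ f + x) : ZMod (p ^ f))) = (gg p x : ZMod (p ^ f)) := by
  have hpf : p ∣ p ^ f := dvd_pow_self p (Nat.one_le_iff_ne_zero.1 hf)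
  have hiff : p ∣ t * p ^ f + x ↔ p ∣ x := by
    constructor
    · intro h
      have := Nat.dvd_sub h (Dvd.dvd.mul_left hpf t)
      simpa using this
    · intro h; exact Nat.dvd_add (Dvd.dvd.mul_left hpf t) h
  rw [gg, gg]
  by_cases h : p ∣ x
  · rw [if_pos (hiff.2 h), if_pos h]
  · rw [if_neg (fun hh => h (hiff.1 hh)), if_neg h]
    push_cast
    rw [show ((p : ZMod (p ^ f))) ^ f = 0 by rw [← Nat.cast_pow]; exact ZMod.natCast_self _]
    ring

lemma PP_blocks (p f m : ℕ) (hf : 1 ≤ f) :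
    ((PP p (m * p ^ f) : ZMod (p ^ f))) = (PP p (p ^ f) : ZMod (p ^ f)) ^ m := by
  induction m with
  | zero => simp [PP]
  | succ m ih =>
    have hsplit : PP p ((m + 1) * p ^ f)
        = PP p (m * p ^ f) * ∏ j ∈ Finset.range (p ^ f), gg p (m * p ^ f + j + 1) := by
      rw [PP, add_mul, one_mul, Finset.prod_range_add]; rfl
    rw [hsplit]
    push_cast
    rw [ih, pow_succ]
    congr 1
    rw [PP]
    push_cast
    refine Finset.prod_congr rfl fun j _ => ?_
    rw [show m * p ^ f + j + 1 = m * p ^ f + (j + 1) by ring, gg_cast_add p f m (j+1) hf]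

lemma prod_univ_sq (G : Type*) [CommGroup G] [Fintype G] : (∏ u : G, u) ^ 2 = 1 := by
  have h1 : ∏ u : G, u = ∏ u : G, u⁻¹ := (Fintype.prod_equiv (Equiv.inv G) _ _ (by simp)).symm
  rw [sq]; nth_rewrite 2 [h1]; rw [← Finset.prod_mul_distrib]; simp

lemma units_sq_eq (p f : ℕ) (hp : p.Prime) (hodd : p ≠ 2) (hf : 1 ≤ f)
    (u : (ZMod (p ^ f))ˣ) (h : u ^ 2 = 1) : u = 1 ∨ u = -1 := by
  haveI : NeZero (p ^ f) := ⟨(pow_pos hp.pos f).ne'⟩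
  set x : ZMod (p ^ f) := (u : ZMod (p ^ f)) with hx
  have hx2 : x ^ 2 = 1 := by
    rw [hx, ← Units.val_pow_eq_pow_val, h, Units.val_one]
  set v : ℤ := (x.val : ℤ) with hv
  have hvx : ((v : ℤ) : ZMod (p ^ f)) = x := by
    rw [hv, Int.cast_natCast, ZMod.natCast_val, ZMod.cast_id]
  have hd : ((p : ℤ)) ^ f ∣ (v - 1) * (v + 1) := by
    have : (((v - 1) * (v + 1) : ℤ) : ZMod (p ^ f)) = 0 := by
      push_cast
      rw [hvx]
      rw [show (x - 1) * (x + 1) = x ^ 2 - 1 by ring, hx2, sub_self]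
    have h2 := (ZMod.intCast_zmod_eq_zero_iff_dvd _ _).1 this
    rwa [show ((p ^ f : ℕ) : ℤ) = (p : ℤ) ^ f by push_cast; ring] at h2
  have hpZ : Prime (p : ℤ) := Nat.prime_iff_prime_int.mp hp
  have h2 : ¬ ((p : ℤ) ∣ v - 1 ∧ (p : ℤ) ∣ v + 1) := by
    rintro ⟨ha, hb⟩
    have : (p : ℤ) ∣ 2 := by
      have := dvd_sub hb ha
      simpa using this
    have h3 : (p : ℕ) ∣ 2 := by exact_mod_cast this
    exact hodd ((Nat.prime_dvd_prime_iff_eq hp Nat.prime_two).1 h3)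
  by_cases hc : (p : ℤ) ∣ v - 1
  · left
    have hnd : ¬ (p : ℤ) ∣ v + 1 := fun hh => h2 ⟨hc, hh⟩
    have : (p : ℤ) ^ f ∣ v - 1 :=
      ((hpZ.coprime_iff_not_dvd.2 hnd).pow_left).dvd_of_dvd_mul_right hd
    have hx1 : x = 1 := by
      have : (((v - 1 : ℤ)) : ZMod (p ^ f)) = 0 := by
        rw [ZMod.intCast_zmod_eq_zero_iff_dvd]
        rwa [show ((p ^ f : ℕ) : ℤ) = (p : ℤ) ^ f by push_cast; ring]
      push_cast at this
      rw [hvx, sub_eq_zero] at this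
      exact this
    exact Units.ext (by rw [← hx, hx1, Units.val_one])
  · right
    have : (p : ℤ) ^ f ∣ v + 1 :=
      ((hpZ.coprime_iff_not_dvd.2 hc).pow_left).dvd_of_dvd_mul_left hd
    have hx1 : x = -1 := by
      have : (((v + 1 : ℤ)) : ZMod (p ^ f)) = 0 := by
        rw [ZMod.intCast_zmod_eq_zero_iff_dvd]
        rwa [show ((p ^ f : ℕ) : ℤ) = (p : ℤ) ^ f by push_cast; ring]
      push_cast at this
      rw [hvx] at this
      linear_combination this
    exact Units.ext (by rw [← hx, hx1, Units.val_neg, Units.val_one])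

lemma PP_cast_eq_prod_units (p f : ℕ) (hp : p.Prime) (hf : 1 ≤ f) [NeZero (p ^ f)] :
    ((PP p (p ^ f) : ZMod (p ^ f))) = ∏ u : (ZMod (p ^ f))ˣ, (u : ZMod (p ^ f)) := by
  have hn1 : 1 < p ^ f := Nat.one_lt_pow (by omega) hp.one_lt
  haveI : Fact (1 < p ^ f) := ⟨hn1⟩
  rw [PP, Nat.cast_prod]
  rw [← Finset.prod_filter_mul_prod_filter_not (Finset.range (p ^ f)) (fun j => p ∣ (j + 1))]
  have h1 : ∏ j ∈ (Finset.range (p ^ f)).filter (fun j => p ∣ (j + 1)),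
      ((gg p (j + 1) : ℕ) : ZMod (p ^ f)) = 1 := by
    apply Finset.prod_eq_one
    intro j hj
    rw [Finset.mem_filter] at hj
    rw [gg, if_pos hj.2, Nat.cast_one]
  rw [h1, one_mul]
  refine Finset.prod_bij (fun j hj => ZMod.unitOfCoprime (j + 1) ?_) ?_ ?_ ?_ ?_
  · rw [Finset.mem_filter] at hj
    exact ((hp.coprime_iff_not_dvd.2 hj.2).pow_left f).symm
  · intro a ha; exact Finset.mem_univ _
  · intro j1 h1' j2 h2' heq
    rw [Finset.mem_filter, Finset.mem_range] at h1' h2'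
    have hv : ((j1 + 1 : ℕ) : ZMod (p ^ f)) = ((j2 + 1 : ℕ) : ZMod (p ^ f)) := by
      have := congrArg (Units.val) heq
      rwa [ZMod.coe_unitOfCoprime, ZMod.coe_unitOfCoprime] at this
    have hj1 : j1 + 1 < p ^ f := by
      rcases Nat.lt_or_ge (j1 + 1) (p ^ f) with h | h
      · exact h
      · exfalso; have : j1 + 1 = p ^ f := by omega
        exact h1'.2 (this ▸ dvd_pow_self p (by omega : f ≠ 0))
    have hj2 : j2 + 1 < p ^ f := by
      rcases Nat.lt_or_ge (j2 + 1) (p ^ f) with h | h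
      · exact h
      · exfalso; have : j2 + 1 = p ^ f := by omega
        exact h2'.2 (this ▸ dvd_pow_self p (by omega : f ≠ 0))
    have := congrArg ZMod.val hv
    rwa [ZMod.val_cast_of_lt hj1, ZMod.val_cast_of_lt hj2, Nat.add_right_cancel_iff] at this
  · intro u _
    set v := (u : ZMod (p ^ f)).val with hv
    have hvlt : v < p ^ f := ZMod.val_lt _
    have hvpos : 0 < v := by
      rcases Nat.eq_zero_or_pos v with h | h
      · exfalso
        exact u.ne_zero ((ZMod.val_eq_zero _).1 h)
      · exact h
    have hcop : Nat.Coprime v (p ^ f) := ZMod.val_coe_unit_coprime u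
    have hnd : ¬ p ∣ v := by
      intro h
      have hg : p ∣ Nat.gcd v (p ^ f) := Nat.dvd_gcd h (dvd_pow_self p (by omega : f ≠ 0))
      rw [Nat.Coprime] at hcop
      rw [hcop] at hg
      exact hp.one_lt.ne' (Nat.dvd_one.1 hg)
    refine ⟨v - 1, ?_, ?_⟩
    · rw [Finset.mem_filter, Finset.mem_range]
      constructor
      · omega
      · rwa [Nat.sub_add_cancel hvpos]
    · apply Units.ext
      rw [ZMod.coe_unitOfCoprime, Nat.sub_add_cancel hvpos, hv, ZMod.natCast_val, ZMod.cast_id]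
  · intro j hj
    rw [Finset.mem_filter] at hj
    rw [gg, if_neg hj.2, ZMod.coe_unitOfCoprime]

lemma prod_units_odd (p f : ℕ) (hp : p.Prime) (hodd : p ≠ 2) (hf : 1 ≤ f) [NeZero (p ^ f)] :
    ∏ u : (ZMod (p ^ f))ˣ, u = (-1 : (ZMod (p ^ f))ˣ) := by
  have hn3 : 2 < p ^ f := by
    have h3 : 3 ≤ p := by have := hp.two_le; omega
    calc 2 < 3 := by omega
      _ ≤ p := h3
      _ ≤ p ^ f := Nat.le_self_pow (by omega) p
  haveI : Fact (1 < p ^ f) := ⟨by omega⟩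
  have hne : (-1 : (ZMod (p ^ f))ˣ) ≠ 1 := by
    intro h
    have h2 := congrArg Units.val h
    rw [Units.val_neg, Units.val_one] at h2
    have : ((2 : ℕ) : ZMod (p ^ f)) = 0 := by
      push_cast
      linear_combination -h2
    rw [ZMod.natCast_eq_zero_iff] at this
    exact absurd (Nat.le_of_dvd (by omega) this) (by omega)
  have hmem1 : (1 : (ZMod (p ^ f))ˣ) ∈ (Finset.univ.erase (-1 : (ZMod (p ^ f))ˣ)) :=
    Finset.mem_erase.2 ⟨hne.symm, Finset.mem_univ _⟩
  rw [← Finset.mul_prod_erase Finset.univ _ (Finset.mem_univ (-1 : (ZMod (p ^ f))ˣ)),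
    ← Finset.mul_prod_erase _ _ hmem1]
  have hprod : ∏ x ∈ (Finset.univ.erase (-1 : (ZMod (p ^ f))ˣ)).erase 1, x = 1 := by
    apply Finset.prod_involution (fun a _ => a⁻¹)
    · intro a _; exact mul_inv_cancel a
    · intro a ha hne1
      rw [Finset.mem_erase, Finset.mem_erase] at ha
      intro heq
      have hsq : a ^ 2 = 1 := by rw [sq]; nth_rewrite 1 [← heq]; exact inv_mul_cancel a
      rcases units_sq_eq p f hp hodd hf a hsq with h | h
      · exact ha.1 h
      · exact ha.2.1 h
    · intro a _; exact inv_inv a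
    · intro a ha
      rw [Finset.mem_erase, Finset.mem_erase] at ha ⊢
      refine ⟨fun h => ha.1 ?_, fun h => ha.2.1 ?_, Finset.mem_univ _⟩
      · rw [← inv_inv a, h, inv_one]
      · rw [← inv_inv a, h]; simp
  rw [hprod, mul_one, mul_one]

lemma wilson_odd (p f : ℕ) (hp : p.Prime) (hodd : p ≠ 2) (hf : 1 ≤ f) :
    ((PP p (p ^ f) : ZMod (p ^ f))) = -1 := by
  haveI : NeZero (p ^ f) := ⟨(pow_pos hp.pos f).ne'⟩
  rw [PP_cast_eq_prod_units p f hp hf]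
  have := congrArg (Units.val) (prod_units_odd p f hp hodd hf)
  rw [Units.val_neg, Units.val_one] at this
  rw [← this]
  exact (map_prod (Units.coeHom (ZMod (p ^ f))) (fun u => u) Finset.univ).symm

lemma wilson_two (p e : ℕ) (hp : p.Prime) (h2 : p = 2) :
    ((PP p (p ^ (e + 1)) : ZMod (p ^ e))) = 1 := by
  subst h2
  rcases Nat.eq_zero_or_pos e with he | he
  · subst he
    haveI : Subsingleton (ZMod (2 ^ 0)) := by rw [pow_zero]; infer_instance
    exact Subsingleton.elim _ _
  haveI : NeZero ((2:ℕ) ^ e) := ⟨(pow_pos hp.pos e).ne'⟩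
  have hblock := PP_blocks 2 e 2 he
  rw [show 2 * 2 ^ e = 2 ^ (e + 1) by rw [_root_.pow_succ]; ring] at hblock
  rw [hblock, PP_cast_eq_prod_units 2 e hp he]
  rw [show (∏ u : (ZMod (2 ^ e))ˣ, (u : ZMod (2 ^ e)))
      = ((∏ u : (ZMod (2 ^ e))ˣ, u : (ZMod (2 ^ e))ˣ) : ZMod (2 ^ e)) from
    (map_prod (Units.coeHom (ZMod (2 ^ e))) (fun u => u) Finset.univ).symm]
  rw [← Units.val_pow_eq_pow_val, prod_univ_sq, Units.val_one]

noncomputable def SS (p : ℕ) [Fact p.Prime] (m e : ℕ) : ℤ_[p] :=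
  (-1) ^ (p * m * e) * (unitPart p (Nat.factorial (m * p ^ e)) : ℤ_[p])

lemma neg_one_pow_congr {R : Type*} [Monoid R] [HasDistribNeg R] {m n : ℕ} (h : Even (m + n)) :
    (-1 : R) ^ m = (-1 : R) ^ n := by
  have hmod := Nat.even_iff.1 h
  rcases Nat.even_or_odd m with hm | hm
  · have hm' := Nat.even_iff.1 hm
    rw [hm.neg_one_pow, (Nat.even_iff.2 (by omega) : Even n).neg_one_pow]
  · have hm' := Nat.odd_iff.1 hm
    rw [hm.neg_one_pow, (Nat.odd_iff.2 (by omega) : Odd n).neg_one_pow]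

lemma norm_neg_one_pow (p : ℕ) [Fact p.Prime] (t : ℕ) : ‖(-1 : ℤ_[p]) ^ t‖ = 1 := by
  rcases Nat.even_or_odd t with h | h
  · rw [h.neg_one_pow, norm_one]
  · rw [h.neg_one_pow, norm_neg, norm_one]

lemma castdown (p N f : ℕ) (x : ZMod (p ^ (f + 1))) (hx : (N : ZMod (p ^ (f + 1))) = x) :
    (N : ZMod (p ^ f)) = ZMod.castHom (pow_dvd_pow p (Nat.le_succ f)) (ZMod (p ^ f)) x := by
  rw [← hx, map_natCast]

lemma SS_step (p : ℕ) [Fact p.Prime] (m e : ℕ) :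
    ‖SS p m (e + 1) - SS p m e‖ ≤ (p : ℝ) ^ (-(e : ℤ)) := by
  have hp : p.Prime := Fact.out
  haveI : NeZero (p ^ e) := ⟨(pow_pos hp.pos e).ne'⟩
  haveI : NeZero (p ^ (e + 1)) := ⟨(pow_pos hp.pos (e+1)).ne'⟩
  set u1 := unitPart p ((m * p ^ (e + 1))!) with hu1
  set u0 := unitPart p ((m * p ^ e)!) with hu0
  set Pi := PP p (m * p ^ (e + 1)) with hPi
  have hrec : u1 = u0 * Pi := unitPart_fact_succ p hp m e
  have hblocks := PP_blocks p (e + 1) m (by omega)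
  by_cases h2 : p = 2
  · -- p = 2
    have hmodsmall : (Pi : ZMod (p ^ e)) = 1 := by
      have hcd := castdown p Pi e _ hblocks
      rw [map_pow, map_natCast, wilson_two p e hp h2, one_pow] at hcd
      exact hcd
    have hdvd : ((p : ℤ)) ^ e ∣ (Pi : ℤ) - 1 := by
      have h0 : (((Pi : ℤ) - 1 : ℤ) : ZMod (p ^ e)) = 0 := by
        push_cast
        rw [hmodsmall]
        ring
      have := (ZMod.intCast_zmod_eq_zero_iff_dvd _ _).1 h0
      rwa [show ((p ^ e : ℕ) : ℤ) = (p : ℤ) ^ e by push_cast; ring] at this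
    have hs1 : (-1 : ℤ_[p]) ^ (p * m * (e + 1)) = 1 :=
      Even.neg_one_pow (by subst h2; exact ⟨m * (e + 1), by ring⟩)
    have hs0 : (-1 : ℤ_[p]) ^ (p * m * e) = 1 :=
      Even.neg_one_pow (by subst h2; exact ⟨m * e, by ring⟩)
    have heq : SS p m (e + 1) - SS p m e = (((u1 : ℤ) - (u0 : ℤ) : ℤ) : ℤ_[p]) := by
      rw [SS, SS, hs1, hs0]
      push_cast
      ring
    rw [heq]
    apply PadicInt.norm_int_le_pow_iff_dvd.2
    rw [hrec]
    push_cast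
    have : ((u0 : ℤ)) * ((Pi : ℤ) - 1) = (u0 : ℤ) * (Pi : ℤ) - u0 := by ring
    exact this ▸ Dvd.dvd.mul_left hdvd (u0 : ℤ)
  · -- p odd
    have hw : (Pi : ZMod (p ^ (e + 1))) = (-1) ^ m := by
      rw [hblocks, wilson_odd p (e + 1) hp h2 (by omega)]
    have hdvd : ((p : ℤ)) ^ (e + 1) ∣ (Pi : ℤ) - (-1) ^ m := by
      have h0 : (((Pi : ℤ) - (-1) ^ m : ℤ) : ZMod (p ^ (e + 1))) = 0 := by
        push_cast
        rw [hw]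
        ring
      have := (ZMod.intCast_zmod_eq_zero_iff_dvd _ _).1 h0
      rwa [show ((p ^ (e + 1) : ℕ) : ℤ) = (p : ℤ) ^ (e + 1) by push_cast; ring] at this
    have hpodd : p % 2 = 1 := Nat.odd_iff.1 (hp.odd_of_ne_two h2)
    have hEven : Even (p * m * e + (p * m * (e + 1) + m)) := by
      have hfac : p * m * e + (p * m * (e + 1) + m) = m * (2 * (p * e) + (p + 1)) := by ring
      rw [hfac]
      exact (Even.add ⟨p * e, by ring⟩ (by rw [Nat.even_add_one, Nat.not_even_iff]; omega)).mul_left m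
    have hsgn : (-1 : ℤ_[p]) ^ (p * m * e) = (-1) ^ (p * m * (e + 1)) * (-1) ^ m := by
      rw [← pow_add]
      exact neg_one_pow_congr hEven
    have heq : SS p m (e + 1) - SS p m e
        = (-1) ^ (p * m * (e + 1)) * (((u1 : ℤ) - (-1) ^ m * (u0 : ℤ) : ℤ) : ℤ_[p]) := by
      rw [SS, SS, hsgn]
      push_cast
      ring
    rw [heq, norm_mul, norm_neg_one_pow, one_mul]
    have hle : ‖(((u1 : ℤ) - (-1) ^ m * (u0 : ℤ) : ℤ) : ℤ_[p])‖ ≤ (p : ℝ) ^ (-((e + 1 : ℕ) : ℤ)) := by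
      apply PadicInt.norm_int_le_pow_iff_dvd.2
      rw [hrec]
      push_cast
      have hfac2 : ((u0:ℤ)) * (Pi:ℤ) - (-1) ^ m * (u0:ℤ) = (u0:ℤ) * ((Pi:ℤ) - (-1) ^ m) := by
        ring
      rw [hfac2]
      exact Dvd.dvd.mul_left hdvd _
    refine le_trans hle ?_
    apply zpow_le_zpow_right₀
    · exact_mod_cast hp.one_lt.le
    · push_cast; omega
lemma SS_ge (p : ℕ) [Fact p.Prime] (m : ℕ) {e e' : ℕ} (h : e ≤ e') :
    ‖SS p m e' - SS p m e‖ ≤ (p : ℝ) ^ (-(e : ℤ)) := by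
  have hp : p.Prime := Fact.out
  induction e' with
  | zero =>
    have he : e = 0 := by omega
    subst he
    simp only [sub_self, norm_zero]
    positivity
  | succ e' ih =>
    rcases Nat.lt_or_ge e (e' + 1) with hlt | hge
    · have h1 := SS_step p m e'
      have h2 := ih (by omega)
      have key : SS p m (e' + 1) - SS p m e
          = (SS p m (e' + 1) - SS p m e') + (SS p m e' - SS p m e) := by ring
      rw [key]
      refine le_trans (PadicInt.nonarchimedean _ _) (max_le (le_trans h1 ?_) h2)
      apply zpow_le_zpow_right₀
      · exact_mod_cast hp.one_lt.le
      · omega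
    · have he : e = e' + 1 := by omega
      subst he
      simp only [sub_self, norm_zero]
      positivity

lemma IsZ_bound (p : ℕ) [Fact p.Prime] (n : ℕ) (z : ℤ_[p]) (h : IsZ p n z) (e : ℕ) :
    ‖z - SS p (unitPart p n) e‖ ≤ (p : ℝ) ^ (-(e : ℤ)) := by
  have h' : Filter.Tendsto (fun e' : ℕ => SS p (unitPart p n) e') Filter.atTop (nhds z) := h
  have ht : Filter.Tendsto (fun e' : ℕ => ‖SS p (unitPart p n) e' - SS p (unitPart p n) e‖)
      Filter.atTop (nhds ‖z - SS p (unitPart p n) e‖) :=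
    ((h'.sub tendsto_const_nhds).norm)
  exact le_of_tendsto ht (Filter.eventually_atTop.2 ⟨e, fun e' he' => SS_ge p _ he'⟩)

lemma sq1 (p : ℕ) [Fact p.Prime] (t : ℕ) : (-1 : ℤ_[p]) ^ t * (-1) ^ t = 1 := by
  rw [← pow_add]; exact Even.neg_one_pow ⟨t, rfl⟩

lemma cast_unit_fact (p : ℕ) [Fact p.Prime] (m e : ℕ) :
    ((unitPart p ((m * p ^ e)!) : ℕ) : ℤ_[p]) = (-1) ^ (p * m * e) * SS p m e := by
  rw [SS, ← mul_assoc, sq1, one_mul]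

end Stmt7Aux

open Stmt7Aux

theorem stmt7 (p : ℕ) [Fact p.Prime] (a b k c : ℕ) (hb : 1 ≤ b) (hba : b ≤ a)
    (hab : padicValNat p (a - b) = 0)
    (hk : ({padicValNat p a, padicValNat p b} : Set ℕ) = {0, k})
    (hc : (padicValNat p a = k ∧ c = a) ∨ (padicValNat p b = k ∧ c = b))
    (za zb zab : ℤ_[p]) (hza : IsZ p a za) (hzb : IsZ p b zb) (hzab : IsZ p (a - b) zab) :
    ∃ E : ℕ, ∀ e ≥ E,
      ‖(unitPart p ((a * p ^ e).choose (b * p ^ e)) : ℤ_[p]) * (zb * zab) -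
        (-1 : ℤ_[p]) ^ (p * c * k) * za‖ ≤ (p : ℝ) ^ (-(e : ℤ)) := by
  have hp : p.Prime := Fact.out
  refine ⟨0, fun e _ => ?_⟩
  set α := padicValNat p a with hα'
  set β := padicValNat p b with hβ'
  have hset := Set.ext_iff.1 hk
  have h0 : 0 = α ∨ 0 = β := by
    have := (hset 0).2 (by simp)
    simpa using this
  have hαk : α = 0 ∨ α = k := by
    have := (hset α).1 (by simp)
    simpa using this
  have hβk : β = 0 ∨ β = k := by
    have := (hset β).1 (by simp)
    simpa using this
  have hcase : (α = k ∧ β = 0 ∧ c = a) ∨ (β = k ∧ α = 0 ∧ c = b) := by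
    rcases hc with ⟨h1, h2⟩ | ⟨h1, h2⟩
    · left; exact ⟨h1, by omega, h2⟩
    · right; exact ⟨h1, by omega, h2⟩
  have ha1 : 1 ≤ a := le_trans hb hba
  have haeq : p ^ α * unitPart p a = a := by
    rw [unitPart_eq_ordCompl p hp, hα', ← Nat.factorization_def a hp]
    exact Nat.ordProj_mul_ordCompl_eq_self a p
  have hbeq : p ^ β * unitPart p b = b := by
    rw [unitPart_eq_ordCompl p hp, hβ', ← Nat.factorization_def b hp]
    exact Nat.ordProj_mul_ordCompl_eq_self b p
  have habeq : unitPart p (a - b) = a - b := by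
    rw [unitPart, hab, pow_zero, Nat.div_one]
  have hmono : ∀ s t : ℕ, s ≤ t → (p : ℝ) ^ (-(t : ℤ)) ≤ (p : ℝ) ^ (-(s : ℤ)) := by
    intro s t h
    apply zpow_le_zpow_right₀
    · exact_mod_cast hp.one_lt.le
    · omega
  -- the combinatorial identity, at the level of unit parts, in ℤ_[p]
  have hchoose : (a * p ^ e).choose (b * p ^ e) * (b * p ^ e)! * ((a - b) * p ^ e)!
      = (a * p ^ e)! := by
    have h := Nat.choose_mul_factorial_mul_factorial
      (Nat.mul_le_mul_right (p ^ e) hba)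
    rwa [← Nat.sub_mul] at h
  have hU : unitPart p ((a * p ^ e).choose (b * p ^ e)) * unitPart p ((b * p ^ e)!)
      * unitPart p (((a - b) * p ^ e)!) = unitPart p ((a * p ^ e)!) := by
    rw [← unitPart_mul p hp, ← unitPart_mul p hp, hchoose]
  have harw : a * p ^ e = unitPart p a * p ^ (e + α) := by
    nth_rewrite 1 [← haeq]; ring
  have hbrw : b * p ^ e = unitPart p b * p ^ (e + β) := by
    nth_rewrite 1 [← hbeq]; ring
  have habrw : (a - b) * p ^ e = unitPart p (a - b) * p ^ e := by rw [habeq]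
  rw [harw, hbrw, habrw] at hU
  have hUc := congrArg (fun x : ℕ => (x : ℤ_[p])) hU
  simp only [Nat.cast_mul] at hUc
  rw [cast_unit_fact p (unitPart p b) (e + β), cast_unit_fact p (unitPart p (a - b)) e,
    cast_unit_fact p (unitPart p a) (e + α), ← harw, ← hbrw] at hUc
  -- parity bookkeeping for the signs
  have hpar : Even ((p * unitPart p b * (e + β) + p * unitPart p (a - b) * e)
      + (p * c * k + p * unitPart p a * (e + α))) := by
    rw [habeq, even_iff_two_dvd, ← ZMod.natCast_eq_zero_iff]
    push_cast
    by_cases hp2 : p = 2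
    · subst hp2
      rw [show ((2 : ℕ) : ZMod 2) = 0 from rfl]
      ring
    · have hpo : ((p : ℕ) : ZMod 2) = 1 := by
        have h1 : p % 2 = 1 := Nat.odd_iff.1 (hp.odd_of_ne_two hp2)
        rw [← ZMod.natCast_mod, h1, Nat.cast_one]
      have hA : ((unitPart p a : ℕ) : ZMod 2) = (a : ZMod 2) := by
        have := congrArg (fun x : ℕ => (x : ZMod 2)) haeq
        push_cast at this
        rw [hpo, one_pow, one_mul] at this
        exact this
      have hB : ((unitPart p b : ℕ) : ZMod 2) = (b : ZMod 2) := by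
        have := congrArg (fun x : ℕ => (x : ZMod 2)) hbeq
        push_cast at this
        rw [hpo, one_pow, one_mul] at this
        exact this
      have hAB : (((a - b : ℕ)) : ZMod 2) = (a : ZMod 2) - (b : ZMod 2) := by
        rw [Nat.cast_sub hba]
      have h22 : (2 : ZMod 2) = 0 := rfl
      rw [hpo, hA, hB, hAB]
      rcases hcase with ⟨h1, h2, h3⟩ | ⟨h1, h2, h3⟩ <;> rw [h1, h2, h3] <;> push_cast
      · linear_combination ((a : ZMod 2) * e + (a : ZMod 2) * k) * h22
      · linear_combination ((a : ZMod 2) * e + (b : ZMod 2) * k) * h22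
  have hsign : ((-1 : ℤ_[p]) ^ (p * unitPart p b * (e + β)) * (-1) ^ (p * unitPart p (a - b) * e))
      = (-1 : ℤ_[p]) ^ (p * c * k) * (-1) ^ (p * unitPart p a * (e + α)) := by
    rw [← pow_add, ← pow_add]
    exact neg_one_pow_congr hpar
  -- the key algebraic identity
  have hkey : (unitPart p ((a * p ^ e).choose (b * p ^ e)) : ℤ_[p])
      * (SS p (unitPart p b) (e + β) * SS p (unitPart p (a - b)) e)
      = (-1) ^ (p * c * k) * SS p (unitPart p a) (e + α) := by
    calc (unitPart p ((a * p ^ e).choose (b * p ^ e)) : ℤ_[p])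
        * (SS p (unitPart p b) (e + β) * SS p (unitPart p (a - b)) e)
        = ((-1 : ℤ_[p]) ^ (p * unitPart p b * (e + β)) * (-1) ^ (p * unitPart p b * (e + β)))
          * (((-1 : ℤ_[p]) ^ (p * unitPart p (a - b) * e) * (-1) ^ (p * unitPart p (a - b) * e))
          * ((unitPart p ((a * p ^ e).choose (b * p ^ e)) : ℤ_[p])
            * (SS p (unitPart p b) (e + β) * SS p (unitPart p (a - b)) e))) := by
          rw [sq1, sq1]; ring
      _ = ((-1 : ℤ_[p]) ^ (p * unitPart p b * (e + β)) * (-1) ^ (p * unitPart p (a - b) * e))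
          * ((unitPart p ((a * p ^ e).choose (b * p ^ e)) : ℤ_[p])
            * ((-1) ^ (p * unitPart p b * (e + β)) * SS p (unitPart p b) (e + β))
            * ((-1) ^ (p * unitPart p (a - b) * e) * SS p (unitPart p (a - b)) e)) := by
          ring
      _ = ((-1 : ℤ_[p]) ^ (p * c * k) * (-1) ^ (p * unitPart p a * (e + α)))
          * ((-1) ^ (p * unitPart p a * (e + α)) * SS p (unitPart p a) (e + α)) := by
          rw [hUc, hsign]
      _ = (-1) ^ (p * c * k)
          * (((-1 : ℤ_[p]) ^ (p * unitPart p a * (e + α)) * (-1) ^ (p * unitPart p a * (e + α)))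
            * SS p (unitPart p a) (e + α)) := by ring
      _ = (-1) ^ (p * c * k) * SS p (unitPart p a) (e + α) := by rw [sq1, one_mul]
  -- limit bounds
  have hzb' := IsZ_bound p b zb hzb (e + β)
  have hzab' := IsZ_bound p (a - b) zab hzab e
  have hza' := IsZ_bound p a za hza (e + α)
  have hX : ‖zb * zab - SS p (unitPart p b) (e + β) * SS p (unitPart p (a - b)) e‖
      ≤ (p : ℝ) ^ (-(e : ℤ)) := by
    have hrw : zb * zab - SS p (unitPart p b) (e + β) * SS p (unitPart p (a - b)) e
        = (zb - SS p (unitPart p b) (e + β)) * zab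
          + SS p (unitPart p b) (e + β) * (zab - SS p (unitPart p (a - b)) e) := by ring
    rw [hrw]
    refine le_trans (PadicInt.nonarchimedean _ _) (max_le ?_ ?_)
    · rw [norm_mul]
      refine le_trans (mul_le_of_le_one_right (norm_nonneg _) (PadicInt.norm_le_one zab)) ?_
      exact le_trans hzb' (hmono e (e + β) (by omega))
    · rw [norm_mul]
      refine le_trans (mul_le_of_le_one_left (norm_nonneg _) (PadicInt.norm_le_one _)) ?_
      exact hzab'
  have hsplit : (unitPart p ((a * p ^ e).choose (b * p ^ e)) : ℤ_[p]) * (zb * zab)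
      - (-1 : ℤ_[p]) ^ (p * c * k) * za
      = (unitPart p ((a * p ^ e).choose (b * p ^ e)) : ℤ_[p])
          * (zb * zab - SS p (unitPart p b) (e + β) * SS p (unitPart p (a - b)) e)
        + (-1 : ℤ_[p]) ^ (p * c * k) * (SS p (unitPart p a) (e + α) - za) := by
    have h1 : (unitPart p ((a * p ^ e).choose (b * p ^ e)) : ℤ_[p]) * (zb * zab)
        - (-1 : ℤ_[p]) ^ (p * c * k) * za
        = (unitPart p ((a * p ^ e).choose (b * p ^ e)) : ℤ_[p])
            * (zb * zab - SS p (unitPart p b) (e + β) * SS p (unitPart p (a - b)) e)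
          + ((unitPart p ((a * p ^ e).choose (b * p ^ e)) : ℤ_[p])
              * (SS p (unitPart p b) (e + β) * SS p (unitPart p (a - b)) e)
            - (-1 : ℤ_[p]) ^ (p * c * k) * za) := by ring
    rw [h1, hkey]
    ring
  rw [hsplit]
  refine le_trans (PadicInt.nonarchimedean _ _) (max_le ?_ ?_)
  · rw [norm_mul]
    refine le_trans (mul_le_of_le_one_left (norm_nonneg _) (PadicInt.norm_le_one _)) ?_
    exact hX
  · rw [norm_mul, norm_neg_one_pow, one_mul, norm_sub_rev]
    exact le_trans hza' (hmono e (e + α) (by omega))
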